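/- Let A be an N×N real symmetric matrix with orthonormal eigenvectors v₂, v₃ ∈ ℝ^N satisfying A v₂ = λ₂ v₂ and A v₃ = λ₃ v₃, where λ₂ ≤ λ₃. Let a₂, a₃ be nonzero real numbers with λ₂ ≠ λ₃, let θ be a real shift with θ < λ₂, and set x₀ = a₂ v₂ + a₃ v₃, λ̃ = x₀ᵀ A x₀ / x₀ᵀ x₀, r₀ = (λ̃ − θ) x₀ − (A − θ I) x₀, α = r₀ᵀ r₀ / (r₀ᵀ (A − θ I) r₀), and x₁ = x₀ + α r₀. Then the coefficients b₂ = x₁ᵀ v₂ and b₃ = x₁ᵀ v₃ of x₁ in the eig「vector basis satisfy (λ₃ − θ) a₂ b₃ = (λ₂ − θ) a₃ b₂; that is, one CG iteration multiplies the ratio of the v₃-component to the v₂-component by the factor (λ₂ − θ)/(λ₃ − θ). -/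
import Mathlib


open Matrix

set_option maxHeartbeats 2000000

/-- One CG iteration multiplies the ratio of the `v₃`-component to the
`v₂`-component by the factor `(λ₂ - θ)/(λ₃ - θ)`:
`(λ₃ - θ) a₂ b₃ = (λ₂ - θ) a₃ b₂` where `b₂ = x₁ᵀ v₂`, `b₃ = x₁ᵀ v₃`. -/
theorem one_cg_step_ratio
    (N : ℕ)
    (A : Matrix (Fin N) (Fin N) ℝ) (hA : A.IsSymm)
    (v2 v3 : Fin N → ℝ)
    (hv2 : v2 ⬝ᵥ v2 = 1) (hv3 : v3 ⬝ᵥ v3 = 1) (hv23 : v2 ⬝ᵥ v3 = 0)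
    (lam2 lam3 : ℝ) (hord : lam2 ≤ lam3) (hne : lam2 ≠ lam3)
    (heig2 : A.mulVec v2 = lam2 • v2) (heig3 : A.mulVec v3 = lam3 • v3)
    (a2 a3 : ℝ) (ha2 : a2 ≠ 0) (ha3 : a3 ≠ 0)
    (θ : ℝ) (hθ : θ < lam2)
    (x0 : Fin N → ℝ) (hx0 : x0 = a2 • v2 + a3 • v3)
    (lamt : ℝ) (hlamt : lamt = (x0 ⬝ᵥ A.mulVec x0) / (x0 ⬝ᵥ x0))
    (r0 : Fin N → ℝ)
    (hr0 : r0 = (lamt - θ) • x0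
        - (A - θ • (1 : Matrix (Fin N) (Fin N) ℝ)).mulVec x0)
    (α : ℝ)
    (hα : α = (r0 ⬝ᵥ r0)
        / (r0 ⬝ᵥ (A - θ • (1 : Matrix (Fin N) (Fin N) ℝ)).mulVec r0))
    (x1 : Fin N → ℝ) (hx1 : x1 = x0 + α • r0)
    (b2 b3 : ℝ) (hb2 : b2 = x1 ⬝ᵥ v2) (hb3 : b3 = x1 ⬝ᵥ v3) :
    (lam3 - θ) * a2 * b3 = (lam2 - θ) * a3 * b2 := by
  have hlt : lam2 < lam3 := lt_of_le_of_ne hord hne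
  have hv32 : v3 ⬝ᵥ v2 = 0 := by rw [dotProduct_comm]; exact hv23
  have hspos : (0:ℝ) < a2^2 + a3^2 := by positivity
  have hsne : (a2^2 + a3^2) ≠ 0 := ne_of_gt hspos
  -- basic dot products with x0
  have hx0v2 : x0 ⬝ᵥ v2 = a2 := by
    simp [hx0, add_dotProduct, smul_dotProduct, hv2, hv32, smul_eq_mul]
  have hx0v3 : x0 ⬝ᵥ v3 = a3 := by
    simp [hx0, add_dotProduct, smul_dotProduct, hv3, hv23, smul_eq_mul]
  have hx0x0 : x0 ⬝ᵥ x0 = a2^2 + a3^2 := by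
    simp [hx0, add_dotProduct, dotProduct_add, smul_dotProduct, dotProduct_smul,
      hv2, hv3, hv23, hv32, smul_eq_mul]
    ring
  have hAx0 : A.mulVec x0 = (lam2*a2) • v2 + (lam3*a3) • v3 := by
    rw [hx0, Matrix.mulVec_add, Matrix.mulVec_smul, Matrix.mulVec_smul, heig2, heig3,
      smul_smul, smul_smul]
    rw [mul_comm a2 lam2, mul_comm a3 lam3]
  have hx0Ax0 : x0 ⬝ᵥ A.mulVec x0 = lam2*a2^2 + lam3*a3^2 := by
    rw [hAx0, hx0]
    simp [add_dotProduct, dotProduct_add, smul_dotProduct, dotProduct_smul,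
      hv2, hv3, hv23, hv32, smul_eq_mul]
    ring
  have hlamt' : lamt * (a2^2 + a3^2) = lam2*a2^2 + lam3*a3^2 := by
    rw [hlamt, hx0Ax0, hx0x0, div_mul_cancel₀ _ hsne]
  -- r0 in the eigenbasis
  have hr0' : r0 = ((lamt - lam2)*a2) • v2 + ((lamt - lam3)*a3) • v3 := by
    rw [hr0, Matrix.sub_mulVec, Matrix.smul_mulVec, Matrix.one_mulVec, hAx0, hx0]
    module
  have hr0v2 : r0 ⬝ᵥ v2 = (lamt - lam2)*a2 := by
    simp [hr0', add_dotProduct, smul_dotProduct, hv2, hv32, smul_eq_mul]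
  have hr0v3 : r0 ⬝ᵥ v3 = (lamt - lam3)*a3 := by
    simp [hr0', add_dotProduct, smul_dotProduct, hv3, hv23, smul_eq_mul]
  have hr0r0 : r0 ⬝ᵥ r0 = ((lamt - lam2)*a2)^2 + ((lamt - lam3)*a3)^2 := by
    rw [hr0']
    simp [add_dotProduct, dotProduct_add, smul_dotProduct, dotProduct_smul,
      hv2, hv3, hv23, hv32, smul_eq_mul]
    ring
  have hAr0 : (A - θ • (1 : Matrix (Fin N) (Fin N) ℝ)).mulVec r0
      = ((lam2 - θ)*((lamt - lam2)*a2)) • v2 + ((lam3 - θ)*((lamt - lam3)*a3)) • v3 := by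
    rw [Matrix.sub_mulVec, Matrix.smul_mulVec, Matrix.one_mulVec, hr0',
      Matrix.mulVec_add, Matrix.mulVec_smul, Matrix.mulVec_smul, heig2, heig3]
    module
  have hden : r0 ⬝ᵥ (A - θ • (1 : Matrix (Fin N) (Fin N) ℝ)).mulVec r0
      = (lam2 - θ)*((lamt - lam2)*a2)^2 + (lam3 - θ)*((lamt - lam3)*a3)^2 := by
    rw [hAr0, hr0']
    simp [add_dotProduct, dotProduct_add, smul_dotProduct, dotProduct_smul,
      hv2, hv3, hv23, hv32, smul_eq_mul]
    ring
  -- scaled coefficient values of r0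
  have hg2s : ((lamt - lam2)*a2)*(a2^2+a3^2) = a2*a3^2*(lam3-lam2) := by
    linear_combination a2 * hlamt'
  have hg3s : ((lamt - lam3)*a3)*(a2^2+a3^2) = -(a3*a2^2*(lam3-lam2)) := by
    linear_combination a3 * hlamt'
  -- positivity facts
  have h2θ : (0:ℝ) < lam2 - θ := by linarith
  have h3θ : (0:ℝ) < lam3 - θ := by linarith
  have ha2sq : (0:ℝ) < a2^2 := by positivity
  have ha3sq : (0:ℝ) < a3^2 := by positivity
  have hdsq : (0:ℝ) < (lam3-lam2)^2 := by nlinarith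
  have hE : (0:ℝ) < (lam2-θ)*a3^2 + (lam3-θ)*a2^2 := by nlinarith
  -- the denominator is nonzero
  have hDs2 : ((lam2 - θ)*((lamt - lam2)*a2)^2 + (lam3 - θ)*((lamt - lam3)*a3)^2)
        * (a2^2+a3^2)^2
      = a2^2*a3^2*(lam3-lam2)^2*((lam2-θ)*a3^2 + (lam3-θ)*a2^2) := by
    linear_combination
      ((lam2-θ)*(((lamt - lam2)*a2)*(a2^2+a3^2) + a2*a3^2*(lam3-lam2))) * hg2s
      + ((lam3-θ)*(((lamt - lam3)*a3)*(a2^2+a3^2) - a3*a2^2*(lam3-lam2))) * hg3s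
  have hDpos : (0:ℝ) <
      ((lam2 - θ)*((lamt - lam2)*a2)^2 + (lam3 - θ)*((lamt - lam3)*a3)^2)
        * (a2^2+a3^2)^2 := by
    rw [hDs2]
    exact mul_pos (mul_pos (mul_pos ha2sq ha3sq) hdsq) hE
  have hDne : ((lam2 - θ)*((lamt - lam2)*a2)^2 + (lam3 - θ)*((lamt - lam3)*a3)^2) ≠ 0 := by
    intro h
    rw [h, zero_mul] at hDpos
    exact lt_irrefl 0 hDpos
  -- α * E = s
  have hαE : α * ((lam2-θ)*a3^2 + (lam3-θ)*a2^2) = a2^2 + a3^2 := by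
    rw [hα, hr0r0, hden, div_mul_eq_mul_div, div_eq_iff hDne]
    have h9 : (a2^2+a3^2)^2 *
        ((((lamt - lam2)*a2)^2 + ((lamt - lam3)*a3)^2) * ((lam2-θ)*a3^2 + (lam3-θ)*a2^2))
      = (a2^2+a3^2)^2 *
        ((a2^2 + a3^2) *
          ((lam2 - θ)*((lamt - lam2)*a2)^2 + (lam3 - θ)*((lamt - lam3)*a3)^2)) := by
      linear_combination
        (((lam2-θ)*a3^2 + (lam3-θ)*a2^2 - (a2^2+a3^2)*(lam2-θ))
          *(((lamt - lam2)*a2)*(a2^2+a3^2) + a2*a3^2*(lam3-lam2))) * hg2s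
        + (((lam2-θ)*a3^2 + (lam3-θ)*a2^2 - (a2^2+a3^2)*(lam3-θ))
          *(((lamt - lam3)*a3)*(a2^2+a3^2) - a3*a2^2*(lam3-lam2))) * hg3s
    exact mul_left_cancel₀ (pow_ne_zero 2 hsne) h9
  -- coefficients of x1
  have hb2' : b2 = a2 + α*((lamt - lam2)*a2) := by
    rw [hb2, hx1, add_dotProduct, smul_dotProduct, hx0v2, hr0v2, smul_eq_mul]
  have hb3' : b3 = a3 + α*((lamt - lam3)*a3) := by
    rw [hb3, hx1, add_dotProduct, smul_dotProduct, hx0v3, hr0v3, smul_eq_mul]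
  have key : (a2^2+a3^2) * ((lam3 - θ) * a2 * b3) = (a2^2+a3^2) * ((lam2 - θ) * a3 * b2) := by
    rw [hb2', hb3']
    linear_combination ((lam3-θ)*a2*α) * hg3s - ((lam2-θ)*a3*α) * hg2s
      - (a2*a3*(lam3-lam2)) * hαE
  exact mul_left_cancel₀ hsne key
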